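/- Let V⁺, V⁻ be complex vector spaces with internal direct sum decompositions V⁺ = K⁺ ⊕ L⁺ and V⁻ = K⁻ ⊕ L⁻. Let D : V⁺ → V⁻ be a linear map with D(K⁺) ⊆ K⁻ and D(L⁺) ⊆ L⁻, and suppose the restriction D|_{K⁺} : K⁺ → K⁻ is a linear isomorphism. Let P₊ : V⁺ → L⁺ be the projection with kernel K⁺ and i₋ : L⁻ → V⁻ the inclusion. Then for every nonzero scalar z ∈ ℂ, the linear map 𝒟(z) : V⁺ × L⁻ → V⁻ × L⁺ defined by 𝒟(z)(v, l) = (D v + z • i₋ l, z • P₊ v) is bijective. -/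

import Mathlib

theorem stmt6 {Vp Vm : Type*}
    [AddCommGroup Vp] [Module ℂ Vp] [AddCommGroup Vm] [Module ℂ Vm]
    (Kp Lp : Submodule ℂ Vp) (Km Lm : Submodule ℂ Vm)
    (hp : IsCompl Kp Lp) (hm : IsCompl Km Lm)
    (D : Vp →ₗ[ℂ] Vm)
    (hDK : ∀ x ∈ Kp, D x ∈ Km) (hDL : ∀ x ∈ Lp, D x ∈ Lm)
    (hKiso : Function.Bijective (D.restrict hDK)) :
    ∀ z : ℂ, z ≠ 0 →
      Function.Bijective
        (fun p : Vp × Lm =>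
          ((D p.1 + z • (p.2 : Vm),
            z • (Lp.linearProjOfIsCompl Kp hp.symm) p.1) : Vm × Lp)) := by
  intro z hz
  set proj := Lp.linearProjOfIsCompl Kp hp.symm with hproj
  constructor
  · rintro ⟨v, m⟩ ⟨v', m'⟩ h
    simp only [Prod.mk.injEq] at h
    obtain ⟨h1, h2⟩ := h
    have hpr : proj v = proj v' := smul_right_injective Lp hz h2
    have hvv' : v - v' ∈ Kp := by
      have : proj (v - v') = 0 := by rw [map_sub, hpr, sub_self]
      exact (Submodule.linearProjOfIsCompl_apply_eq_zero_iff hp.symm).1 this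
    have hDK' : D (v - v') ∈ Km := hDK _ hvv'
    have hDL' : D (v - v') ∈ Lm := by
      have : D (v - v') = z • ((m' : Vm) - (m : Vm)) := by
        rw [map_sub]
        have := h1
        rw [add_comm (D v), add_comm (D v')] at this
        linear_combination (norm := module) this
      rw [this]
      exact Lm.smul_mem _ (Lm.sub_mem m'.2 m.2)
    have hD0 : D (v - v') = 0 := by
      have := hm.inf_eq_bot
      have : D (v - v') ∈ Km ⊓ Lm := ⟨hDK', hDL'⟩
      rwa [hm.inf_eq_bot, Submodule.mem_bot] at this
    have hv : v = v' := by
      have h0 : (D.restrict hDK) ⟨v - v', hvv'⟩ = (D.restrict hDK) ⟨0, Kp.zero_mem⟩ := by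
        ext
        simpa [LinearMap.restrict_apply] using hD0
      have := hKiso.1 h0
      have : v - v' = 0 := congrArg Subtype.val this
      exact sub_eq_zero.1 this
    subst hv
    have hm' : (m : Vm) = (m' : Vm) := by
      have : z • (m : Vm) = z • (m' : Vm) := by
        have := h1; simpa using this
      exact smul_right_injective Vm hz this
    exact Prod.ext rfl (Subtype.ext hm')
  · rintro ⟨w, l'⟩
    -- decompose w
    set projK := Km.linearProjOfIsCompl Lm hm with hprojK
    set wK : Km := projK w
    have hwL : w - (wK : Vm) ∈ Lm := by
      have : projK (w - (wK : Vm)) = 0 := by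
        rw [map_sub]
        exact sub_eq_zero.2 (Submodule.linearProjOfIsCompl_apply_left hm wK).symm
      exact (Submodule.linearProjOfIsCompl_apply_eq_zero_iff hm).1 this
    obtain ⟨k, hk⟩ := hKiso.2 wK
    set lv : Vp := z⁻¹ • (l' : Vp)
    have hlv : lv ∈ Lp := Lp.smul_mem _ l'.2
    have hDlv : D lv ∈ Lm := hDL _ hlv
    refine ⟨((k : Vp) + lv, z⁻¹ • (⟨w - wK, hwL⟩ - ⟨D lv, hDlv⟩ : Lm)), ?_⟩
    have hDk : D (k : Vp) = (wK : Vm) := congrArg Subtype.val hk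
    simp only [Prod.mk.injEq]
    constructor
    · push_cast
      rw [map_add, hDk, smul_smul, mul_inv_cancel₀ hz, one_smul]
      abel
    · rw [map_add]
      have h1 : proj (k : Vp) = 0 :=
        Submodule.linearProjOfIsCompl_apply_right hp.symm k
      have h2 : proj lv = z⁻¹ • l' := by
        have : proj (lv) = ⟨lv, hlv⟩ :=
          Submodule.linearProjOfIsCompl_apply_left hp.symm ⟨lv, hlv⟩
        rw [this]
        ext
        simp [lv]
      rw [h1, h2, zero_add, smul_smul, mul_inv_cancel₀ hz, one_smul]
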